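/- arXiv:2506.05619 — 13 statements merged into one kernel-verified Lean document; each statement's English description precedes it below -/
import Mathlib

section
/- Let σ be a profile over rankings of M alternatives with induced preference function P^σ, and for r ∈ ℝ^M define the Bradley–Terry log-likelihood L(r) := Σ_{i<j} [ P^σ(y_i ≻ y_j)·log(e^{r_i}/(e^{r_i}+e^{r_j})) + P^σ(y_j ≻ y_i)·log(e^{r_j}/(e^{r_i}+e^{r_j})) ]. If r* ∈ ℝ^M is a global maximizer of L, then for all i, j ∈ {1,…,M}: r*_i > r*_j if and only if B(y_i) > B(y_j). -/
open Finset

noncomputable section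

/-- A profile: a probability distribution over rankings (permutations of `Fin M`,
where `r i` is the 0-indexed position of alternative `i`, smaller is better). -/
def IsProfile (M : ℕ) (σ : Equiv.Perm (Fin M) → ℝ) : Prop :=
  (∀ r, 0 ≤ σ r) ∧ ∑ r : Equiv.Perm (Fin M), σ r = 1

/-- Induced preference function `P^σ(y_i ≻ y_j)`. -/
def Pref (M : ℕ) (σ : Equiv.Perm (Fin M) → ℝ) (i j : Fin M) : ℝ :=
  ∑ r : Equiv.Perm (Fin M), σ r * (if r i < r j then (1 : ℝ) else 0)

/-- Top-choice share `w^σ_i`. -/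
def topShare (M : ℕ) (σ : Equiv.Perm (Fin M) → ℝ) (i : Fin M) : ℝ :=
  ∑ r : Equiv.Perm (Fin M), (if (r i : ℕ) = 0 then σ r else 0)

/-- Borda score `B(y_i) = Σ_r σ_r (M − r(y_i))` (with 1-indexed ranks; here ranks
are 0-indexed, so the weight is `M − 1 − r i`). -/
def Borda (M : ℕ) (σ : Equiv.Perm (Fin M) → ℝ) (i : Fin M) : ℝ :=
  ∑ r : Equiv.Perm (Fin M), σ r * ((M : ℝ) - 1 - ((r i : ℕ) : ℝ))

/-- `u_i := min_{j ≠ i} P^σ(y_i ≻ y_j)`. -/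
def minPref (M : ℕ) (σ : Equiv.Perm (Fin M) → ℝ) (i : Fin M) : ℝ :=
  sInf {x : ℝ | ∃ j, j ≠ i ∧ x = Pref M σ i j}

/-- The policy `Φ*(σ)(y_i) := u_i / Σ_j u_j`. -/
def PhiStar (M : ℕ) (σ : Equiv.Perm (Fin M) → ℝ) (i : Fin M) : ℝ :=
  minPref M σ i / ∑ j : Fin M, minPref M σ j
namespace BTAux

def q (x y : ℝ) : ℝ := Real.exp x / (Real.exp x + Real.exp y)

lemma q_def (x y : ℝ) : q x y = Real.exp x / (Real.exp x + Real.exp y) := rfl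

lemma denom_pos (x y : ℝ) : 0 < Real.exp x + Real.exp y :=
  add_pos (Real.exp_pos x) (Real.exp_pos y)

lemma q_add (x y : ℝ) : q x y + q y x = 1 := by
  unfold q
  rw [add_comm (Real.exp y), ← add_div, div_self (ne_of_gt (denom_pos x y))]

lemma q_self (x : ℝ) : q x x = 1 / 2 := by
  have h := Real.exp_pos x
  rw [q_def, div_eq_iff (ne_of_gt (denom_pos x x))]
  ring

lemma q_lt (y : ℝ) {a b : ℝ} (h : a < b) : q a y < q b y := by
  unfold q
  rw [div_lt_div_iff₀ (denom_pos a y) (denom_pos b y)]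
  have ha := Real.exp_pos a
  have hy := Real.exp_pos y
  have hab := Real.exp_lt_exp.2 h
  nlinarith

lemma log_q (x y : ℝ) : Real.log (q x y) = x - Real.log (Real.exp x + Real.exp y) := by
  unfold q
  rw [Real.log_div (Real.exp_ne_zero x) (ne_of_gt (denom_pos x y)), Real.log_exp]

lemma hasDerivAt_logsum (c d t₀ : ℝ) :
    HasDerivAt (fun t => Real.log (Real.exp (c + t) + Real.exp d)) (q (c + t₀) d) t₀ := by
  have h1 : HasDerivAt (fun t : ℝ => Real.exp (c + t) + Real.exp d) (Real.exp (c + t₀)) t₀ := by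
    simpa using (((hasDerivAt_id t₀).const_add c).exp).add_const (Real.exp d)
  simpa [q] using h1.log (ne_of_gt (denom_pos (c + t₀) d))

lemma hasDerivAt_log_q_left (c d t₀ : ℝ) :
    HasDerivAt (fun t => Real.log (q (c + t) d)) (q d (c + t₀)) t₀ := by
  have he : (fun t => Real.log (q (c + t) d))
      = fun t => (c + t) - Real.log (Real.exp (c + t) + Real.exp d) :=
    funext fun t => log_q _ _
  rw [he]
  have h := ((hasDerivAt_id t₀).const_add c).sub (hasDerivAt_logsum c d t₀)
  have hq : q d (c + t₀) = 1 - q (c + t₀) d := by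
    have := q_add (c + t₀) d; linarith
  rw [hq]; exact h

lemma hasDerivAt_log_q_right (c d t₀ : ℝ) :
    HasDerivAt (fun t => Real.log (q d (c + t))) (-q (c + t₀) d) t₀ := by
  have he : (fun t => Real.log (q d (c + t)))
      = fun t => d - Real.log (Real.exp (c + t) + Real.exp d) := by
    funext t
    rw [log_q, add_comm (Real.exp d)]
  rw [he]
  simpa using (hasDerivAt_const t₀ d).fun_sub (hasDerivAt_logsum c d t₀)

lemma pref_self (M : ℕ) (σ : Equiv.Perm (Fin M) → ℝ) (i : Fin M) : Pref M σ i i = 0 := by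
  simp [Pref]

lemma pref_add (M : ℕ) (σ : Equiv.Perm (Fin M) → ℝ) (hσ : IsProfile M σ) {i k : Fin M}
    (h : i ≠ k) : Pref M σ i k + Pref M σ k i = 1 := by
  unfold Pref
  have h2 : ∀ r : Equiv.Perm (Fin M),
      σ r * (if r i < r k then (1:ℝ) else 0) + σ r * (if r k < r i then (1:ℝ) else 0) = σ r := by
    intro r
    have hne : r i ≠ r k := fun hc => h (r.injective hc)
    rcases lt_or_gt_of_ne hne with hlt | hgt
    · rw [if_pos hlt, if_neg (not_lt.2 hlt.le)]; ring
    · rw [if_neg (not_lt.2 hgt.le), if_pos hgt]; ring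
  rw [← Finset.sum_add_distrib, Finset.sum_congr rfl fun r _ => h2 r, hσ.2]

lemma borda_eq (M : ℕ) (σ : Equiv.Perm (Fin M) → ℝ) (i : Fin M) :
    Borda M σ i = ∑ k : Fin M, Pref M σ i k := by
  unfold Borda Pref
  rw [Finset.sum_comm]
  apply Finset.sum_congr rfl
  intro r _
  rw [← Finset.mul_sum]
  congr 1
  rw [Finset.sum_boole]
  have hcard : ({k : Fin M | r i < r k} : Finset (Fin M)).card
      = ({v : Fin M | r i < v} : Finset (Fin M)).card := by
    apply Finset.card_bij (fun k _ => r k)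
    · intro k hk; simp only [Finset.mem_filter, Finset.mem_univ, true_and,
        Finset.mem_coe, Finset.mem_sort] at hk ⊢
      simpa using hk
    · intro a _ b _ hab; exact r.injective hab
    · intro v hv
      refine ⟨r.symm v, ?_, by simp⟩
      simp only [Finset.mem_filter, Finset.mem_univ, true_and] at hv ⊢
      simpa using hv
  have hpos : 0 < M := i.pos
  have hle : (r i : ℕ) ≤ M - 1 := by omega
  rw [show ({k : Fin M | r i < r k} : Finset (Fin M)) = Finset.univ.filter (fun k => r i < r k) from rfl] at hcard
  rw [hcard]
  rw [Finset.filter_lt_eq_Ioi, Fin.card_Ioi]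
  rw [Nat.cast_sub hle, Nat.cast_sub (by omega : 1 ≤ M)]
  push_cast
  ring
end BTAux

/-- A global maximizer of the Bradley–Terry log-likelihood induces
the same ordering of the alternatives as the Borda score. -/
theorem bt_mle_ranking_eq_borda_ranking
    (M : ℕ) (hM : 2 ≤ M) (σ : Equiv.Perm (Fin M) → ℝ) (hσ : IsProfile M σ)
    (L : (Fin M → ℝ) → ℝ)
    (hL : ∀ v : Fin M → ℝ, L v =
      ∑ i : Fin M, ∑ j : Fin M, if i < j then
        Pref M σ i j * Real.log (Real.exp (v i) / (Real.exp (v i) + Real.exp (v j)))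
          + Pref M σ j i * Real.log (Real.exp (v j) / (Real.exp (v i) + Real.exp (v j)))
      else 0)
    (rstar : Fin M → ℝ) (hmax : ∀ v : Fin M → ℝ, L v ≤ L rstar) :
    ∀ i j : Fin M, rstar i > rstar j ↔ Borda M σ i > Borda M σ j := by
  classical
  have hS : ∀ v : Fin M → ℝ, L v = ∑ a : Fin M, ∑ b : Fin M, (if a < b then
      Pref M σ a b * Real.log (BTAux.q (v a) (v b))
        + Pref M σ b a * Real.log (BTAux.q (v b) (v a)) else 0) := by
    intro v
    rw [hL v]
    apply Finset.sum_congr rfl; intro a _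
    apply Finset.sum_congr rfl; intro b _
    rw [BTAux.q_def, BTAux.q_def, add_comm (Real.exp (v b))]
  -- Stationarity at the maximizer
  have hstat : ∀ i : Fin M,
      ∑ k : Fin M, (if k ≠ i then Pref M σ i k - BTAux.q (rstar i) (rstar k) else 0) = 0 := by
    intro i
    set u : ℝ → Fin M → ℝ := fun t => Function.update rstar i (rstar i + t) with hu
    have hu0 : u 0 = rstar := by
      rw [hu]; simp
    have hua : ∀ t, u t i = rstar i + t := by
      intro t; rw [hu]; simp
    have hub : ∀ (t : ℝ) (b : Fin M), b ≠ i → u t b = rstar b := by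
      intro t b hb; rw [hu]; simp [Function.update_apply, hb]
    set D : Fin M → Fin M → ℝ := fun a b =>
      if a < b then
        (if a = i then Pref M σ i b - BTAux.q (rstar i) (rstar b)
         else if b = i then Pref M σ i a - BTAux.q (rstar i) (rstar a) else 0)
      else 0 with hD
    have hderiv : HasDerivAt (fun t => L (u t)) (∑ a : Fin M, ∑ b : Fin M, D a b) 0 := by
      have he : (fun t => L (u t)) = fun t => ∑ a : Fin M, ∑ b : Fin M,
          (if a < b then Pref M σ a b * Real.log (BTAux.q (u t a) (u t b))
              + Pref M σ b a * Real.log (BTAux.q (u t b) (u t a)) else 0) :=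
        funext fun t => hS (u t)
      rw [he]
      apply HasDerivAt.fun_sum; intro a _
      apply HasDerivAt.fun_sum; intro b _
      by_cases hab : a < b
      · have hne : a ≠ b := ne_of_lt hab
        by_cases hai : a = i
        · subst hai
          have hbi : b ≠ a := hab.ne'
          simp only [if_pos hab, hua, hub _ _ hbi, hD, eq_self_iff_true, if_true]
          have h1 := (BTAux.hasDerivAt_log_q_left (rstar a) (rstar b) 0).const_mul (Pref M σ a b)
          have h2 := (BTAux.hasDerivAt_log_q_right (rstar a) (rstar b) 0).const_mul (Pref M σ b a)
          have h := h1.fun_add h2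
          convert h using 1
          have e1 : BTAux.q (rstar b) (rstar a + 0) = 1 - BTAux.q (rstar a + 0) (rstar b) := by
            have := BTAux.q_add (rstar a + 0) (rstar b); linarith
          have e2 : Pref M σ b a = 1 - Pref M σ a b := by
            have := BTAux.pref_add M σ hσ hne; linarith
          rw [e1, e2, add_zero]
          ring
        · by_cases hbi : b = i
          · subst hbi
            simp only [if_pos hab, hua, hub _ _ hai, hD, if_neg hai, eq_self_iff_true, if_true]
            have h1 := (BTAux.hasDerivAt_log_q_right (rstar b) (rstar a) 0).const_mul (Pref M σ a b)
            have h2 := (BTAux.hasDerivAt_log_q_left (rstar b) (rstar a) 0).const_mul (Pref M σ b a)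
            have h := h1.fun_add h2
            convert h using 1
            have e1 : BTAux.q (rstar a) (rstar b + 0) = 1 - BTAux.q (rstar b + 0) (rstar a) := by
              have := BTAux.q_add (rstar b + 0) (rstar a); linarith
            have e2 : Pref M σ a b = 1 - Pref M σ b a := by
              have := BTAux.pref_add M σ hσ hne; linarith
            rw [e1, e2, add_zero]
            ring
          · simp only [if_pos hab, hub _ _ hai, hub _ _ hbi, hD, if_neg hai, if_neg hbi]
            exact hasDerivAt_const 0 _
      · simp only [if_neg hab, hD]
        exact hasDerivAt_const 0 _
    have hφmax : IsLocalMax (fun t => L (u t)) 0 := by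
      have h : ∀ t : ℝ, L (u t) ≤ L (u 0) := by
        intro t; rw [hu0]; exact hmax _
      exact Filter.Eventually.of_forall h
    have hzero := hφmax.hasDerivAt_eq_zero hderiv
    -- rearrange the double sum
    have hsplit : ∀ a : Fin M, ∑ b : Fin M, D a b =
        (if a = i then ∑ b : Fin M, (if i < b then Pref M σ i b - BTAux.q (rstar i) (rstar b) else 0)
         else (if a < i then Pref M σ i a - BTAux.q (rstar i) (rstar a) else 0)) := by
      intro a
      by_cases hai : a = i
      · subst hai
        rw [if_pos rfl]
        apply Finset.sum_congr rfl; intro b _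
        simp only [hD]
        by_cases h : a < b <;> simp [h]
      · rw [if_neg hai, Finset.sum_eq_single i]
        · simp only [hD]
          by_cases h : a < i <;> simp [h, hai]
        · intro b _ hbne
          simp only [hD]
          by_cases h : a < b <;> simp [h, hai, hbne]
        · intro h; exact absurd (Finset.mem_univ i) h
      -- end hsplit
    have hA : ∑ a : Fin M, ∑ b : Fin M, D a b
        = (∑ b : Fin M, (if i < b then Pref M σ i b - BTAux.q (rstar i) (rstar b) else 0))
          + ∑ a : Fin M, (if a < i then Pref M σ i a - BTAux.q (rstar i) (rstar a) else 0) := by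
      rw [Finset.sum_congr rfl fun a _ => hsplit a]
      rw [← Finset.add_sum_erase _ _ (Finset.mem_univ i), if_pos rfl]
      congr 1
      rw [Finset.sum_congr rfl (fun a ha => if_neg (Finset.ne_of_mem_erase ha))]
      exact Finset.sum_erase _ (if_neg (lt_irrefl i))
    have hB : ∑ k : Fin M, (if k ≠ i then Pref M σ i k - BTAux.q (rstar i) (rstar k) else 0)
        = (∑ b : Fin M, (if i < b then Pref M σ i b - BTAux.q (rstar i) (rstar b) else 0))
          + ∑ a : Fin M, (if a < i then Pref M σ i a - BTAux.q (rstar i) (rstar a) else 0) := by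
      rw [← Finset.sum_add_distrib]
      apply Finset.sum_congr rfl
      intro k _
      rcases lt_trichotomy k i with h | h | h
      · rw [if_pos h.ne, if_neg (asymm h), if_pos h]; ring
      · subst h; simp
      · rw [if_pos h.ne', if_pos h, if_neg (asymm h)]; ring
    rw [hB, ← hA]
    exact hzero
  -- Borda in terms of the sigmoid sums
  have hborda : ∀ i : Fin M,
      Borda M σ i = (∑ k : Fin M, BTAux.q (rstar i) (rstar k)) - 1 / 2 := by
    intro i
    have h1 : ∑ k : Fin M, (if k ≠ i then Pref M σ i k else 0)
        = ∑ k : Fin M, (if k ≠ i then BTAux.q (rstar i) (rstar k) else 0) := by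
      have hsub : ∑ k : Fin M, ((if k ≠ i then Pref M σ i k else 0)
          - (if k ≠ i then BTAux.q (rstar i) (rstar k) else 0)) = 0 := by
        rw [← hstat i]
        apply Finset.sum_congr rfl
        intro k _
        by_cases h : k ≠ i
        · rw [if_pos h, if_pos h, if_pos h]
        · rw [if_neg h, if_neg h, if_neg h]; ring
      rw [Finset.sum_sub_distrib] at hsub
      linarith
    have h2 : ∑ k : Fin M, (if k ≠ i then Pref M σ i k else 0) = ∑ k : Fin M, Pref M σ i k := by
      apply Finset.sum_congr rfl
      intro k _
      by_cases h : k = i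
      · subst h; rw [if_neg (by simp), BTAux.pref_self]
      · rw [if_pos h]
    have h3 : ∑ k : Fin M, (if k ≠ i then BTAux.q (rstar i) (rstar k) else 0)
        = (∑ k : Fin M, BTAux.q (rstar i) (rstar k)) - 1 / 2 := by
      have h4 : ∑ k : Fin M, ((BTAux.q (rstar i) (rstar k))
          - (if k ≠ i then BTAux.q (rstar i) (rstar k) else 0))
          = ∑ k : Fin M, (if k = i then BTAux.q (rstar i) (rstar k) else 0) := by
        apply Finset.sum_congr rfl
        intro k _
        by_cases h : k = i
        · rw [if_pos h, if_neg (by simp [h])]; ring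
        · rw [if_neg h, if_pos h]; ring
      rw [Finset.sum_sub_distrib, Finset.sum_ite_eq' Finset.univ i, if_pos (Finset.mem_univ i),
        BTAux.q_self] at h4
      linarith
    rw [BTAux.borda_eq, ← h2, h1, h3]
  -- strict monotonicity of the sigmoid sum
  have hmono : StrictMono (fun x => ∑ k : Fin M, BTAux.q x (rstar k)) := by
    intro x y hxy
    apply Finset.sum_lt_sum_of_nonempty
    · exact ⟨⟨0, by omega⟩, Finset.mem_univ _⟩
    · intro k _
      exact BTAux.q_lt (rstar k) hxy
  intro i j
  rw [gt_iff_lt, gt_iff_lt, hborda i, hborda j, sub_lt_sub_iff_right]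
  exact (hmono.lt_iff_lt).symm
end
end

section
/- For every integer M ≥ 2 and every ε with 0 < ε < 1/M, there exists a profile σ over rankings of M alternatives whose top-choice shares are w^σ_1 = 1/M + ε, w^σ_2 = 1/M − ε, and w^σ_j = 1/M for all j ≥ 3, and such that y_1 is the unique maximizer of the Borda score B. Consequently, any rule that places all probability on Borda-score maximizers assigns probability 0 to y_2 even though w^σ_2 > 0, so the maximal Borda rule violates α-PPA for every positive α. -/
open Finset

noncomputable section

/-- For every `M ≥ 2` and `0 < ε < 1/M` there is a profile with
top-choice shares `(1/M + ε, 1/M − ε, 1/M, …, 1/M)` whose unique Borda maximizer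
is `y_1`; hence any rule supported on Borda maximizers gives probability `0` to
`y_2` although `w_2 > 0`, violating `α`-PPA for every `α > 0`. -/
theorem maximal_borda_violates_PPA
    (M : ℕ) (hM : 2 ≤ M) (ε : ℝ) (hε0 : 0 < ε) (hε1 : ε < 1 / M) :
    ∃ σ : Equiv.Perm (Fin M) → ℝ, IsProfile M σ ∧
      topShare M σ ⟨0, by omega⟩ = 1 / M + ε ∧
      topShare M σ ⟨1, by omega⟩ = 1 / M - ε ∧
      (∀ j : Fin M, j ≠ ⟨0, by omega⟩ → j ≠ ⟨1, by omega⟩ → topShare M σ j = 1 / M) ∧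
      (∀ j : Fin M, j ≠ ⟨0, by omega⟩ → Borda M σ j < Borda M σ ⟨0, by omega⟩) ∧
      ∀ π : Fin M → ℝ, (∀ j, 0 ≤ π j) → (∑ j, π j = 1) →
        (∀ j : Fin M, (∃ k, Borda M σ j < Borda M σ k) → π j = 0) →
        ∀ α : ℝ, 0 < α → ¬ α * topShare M σ ⟨1, by omega⟩ ≤ π ⟨1, by omega⟩ := by
  haveI : NeZero M := ⟨by omega⟩
  have hMR : (0:ℝ) < (M:ℝ) := by exact_mod_cast Nat.lt_of_lt_of_le (by norm_num) hM
  set L : Fin M := ⟨M-1, by omega⟩ with hLdef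
  have hLne0 : L ≠ (0 : Fin M) := by
    simp only [Ne, Fin.ext_iff, hLdef, Fin.val_zero]; omega
  have h0neL : (0 : Fin M) ≠ L := hLne0.symm
  set c : Fin M → ℝ := fun k => 1/M + (if k = 0 then ε else 0) - (if k = L then ε else 0)
    with hcdef
  have hc0 : c 0 = 1/M + ε := by simp [hcdef, h0neL]
  have hcL : c L = 1/M - ε := by simp [hcdef, hLne0]
  have hcother : ∀ k : Fin M, k ≠ 0 → k ≠ L → c k = 1/M := by
    intro k h0 hL; simp [hcdef, h0, hL]
  set rot : Fin M → Equiv.Perm (Fin M) := fun k => Equiv.addRight k with hrotdef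
  set σ : Equiv.Perm (Fin M) → ℝ := fun r => ∑ k : Fin M, if r = rot k then c k else 0
    with hσdef
  have hεM : ε ≤ 1 / M := le_of_lt hε1
  have hcnonneg : ∀ k, 0 ≤ c k := by
    intro k
    by_cases h0 : k = 0
    · rw [h0, hc0]; positivity
    · by_cases hL : k = L
      · rw [hL, hcL]; linarith
      · rw [hcother k h0 hL]; positivity
  -- collapse sums over permutations to sums over rotations
  have hcollapse : ∀ g : Equiv.Perm (Fin M) → ℝ,
      ∑ r : Equiv.Perm (Fin M), σ r * g r = ∑ k : Fin M, c k * g (rot k) := by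
    intro g
    simp only [hσdef, Finset.sum_mul]
    rw [Finset.sum_comm]
    refine Finset.sum_congr rfl fun k _ => ?_
    simp [Finset.sum_ite_eq', ite_mul]
  have hcsum : ∑ k : Fin M, c k = 1 := by
    simp only [hcdef]
    rw [Finset.sum_sub_distrib, Finset.sum_add_distrib]
    simp [Finset.sum_ite_eq', Finset.card_univ]
  have hσsum : ∑ r : Equiv.Perm (Fin M), σ r = 1 := by
    have h := hcollapse (fun _ => 1)
    simp only [mul_one] at h
    rw [h, hcsum]
  have hσnonneg : ∀ r, 0 ≤ σ r := by
    intro r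
    apply Finset.sum_nonneg
    intro k _
    by_cases h : r = rot k <;> simp [h, hcnonneg k]
  -- top shares
  have hrotval : ∀ k i : Fin M, rot k i = i + k := fun k i => rfl
  have htop : ∀ i : Fin M, topShare M σ i = c (-i) := by
    intro i
    have h1 : topShare M σ i
        = ∑ r : Equiv.Perm (Fin M), σ r * (if (r i : ℕ) = 0 then 1 else 0) := by
      unfold topShare
      refine Finset.sum_congr rfl fun r _ => ?_
      by_cases h : (r i : ℕ) = 0 <;> simp [h]
    rw [h1, hcollapse]
    have h2 : ∀ k : Fin M, (((rot k i : Fin M) : ℕ) = 0) ↔ (k = -i) := by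
      intro k
      rw [hrotval]
      constructor
      · intro h
        have h' : i + k = 0 := Fin.ext (by simpa using h)
        exact eq_neg_of_add_eq_zero_right h'
      · intro h; simp [h]
    have h3 : ∀ k : Fin M,
        c k * (if ((rot k i : Fin M) : ℕ) = 0 then (1:ℝ) else 0)
          = if k = -i then c k else 0 := by
      intro k
      by_cases h : k = -i
      · rw [if_pos ((h2 k).mpr h), if_pos h, mul_one]
      · rw [if_neg (fun hc => h ((h2 k).mp hc)), if_neg h, mul_zero]
    simp only [h3]
    simp [Finset.sum_ite_eq']
  have hneg1 : -(⟨1, by omega⟩ : Fin M) = L := by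
    apply Fin.ext
    simp [Fin.neg_def, hLdef]
  have hneg0 : -(⟨0, by omega⟩ : Fin M) = 0 := by
    simp [Fin.ext_iff]
  have htop0 : topShare M σ ⟨0, by omega⟩ = 1 / M + ε := by
    rw [htop, hneg0, hc0]
  have htop1 : topShare M σ ⟨1, by omega⟩ = 1 / M - ε := by
    rw [htop, hneg1, hcL]
  have htopj : ∀ j : Fin M, j ≠ ⟨0, by omega⟩ → j ≠ ⟨1, by omega⟩ → topShare M σ j = 1 / M := by
    intro j hj0 hj1
    rw [htop]
    have h0 : -j ≠ (0 : Fin M) := by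
      intro h
      exact hj0 (by simpa [hneg0] using congrArg Neg.neg h)
    have hL : -j ≠ L := by
      intro h
      apply hj1
      have h' := congrArg Neg.neg h
      rw [neg_neg, ← hneg1, neg_neg] at h'
      exact h'
    exact hcother _ h0 hL
  -- Borda scores
  have hBorda : ∀ i : Fin M, Borda M σ i =
      (1/M) * (∑ k : Fin M, ((M:ℝ) - 1 - (k:ℕ)))
      + ε * ((M:ℝ) - 1 - (i:ℕ)) - ε * ((M:ℝ) - 1 - (((i + L : Fin M) : ℕ) : ℝ)) := by
    intro i
    unfold Borda
    rw [hcollapse]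
    simp only [hcdef, hrotval, sub_mul, add_mul, ite_mul, zero_mul]
    rw [Finset.sum_sub_distrib, Finset.sum_add_distrib, ← Finset.mul_sum]
    have hre : ∑ k : Fin M, ((M:ℝ) - 1 - (((i + k : Fin M):ℕ):ℝ))
        = ∑ k : Fin M, ((M:ℝ) - 1 - ((k:ℕ):ℝ)) := by
      have h := Equiv.sum_comp (Equiv.addLeft i) (fun k : Fin M => (M:ℝ) - 1 - ((k:ℕ):ℝ))
      simpa using h
    rw [hre]
    simp [Finset.sum_ite_eq']
  have hval0L : (((⟨0, by omega⟩ : Fin M) + L : Fin M) : ℕ) = M - 1 := by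
    simp [Fin.add_def, hLdef]
  have hvaljL : ∀ j : Fin M, j ≠ ⟨0, by omega⟩ → ((j + L : Fin M) : ℕ) = (j:ℕ) - 1 := by
    intro j hj
    have h1 : (j:ℕ) < M := j.isLt
    have h2 : 1 ≤ (j:ℕ) := by
      rcases Nat.eq_zero_or_pos (j:ℕ) with h|h
      · exact absurd (Fin.ext h) hj
      · omega
    simp only [Fin.add_def, hLdef]
    rw [Nat.mod_eq_sub_mod (by omega), Nat.mod_eq_of_lt (by omega)]
    omega
  have hB0 : Borda M σ ⟨0, by omega⟩ =
      (1/M) * (∑ k : Fin M, ((M:ℝ) - 1 - (k:ℕ))) + ε * ((M:ℝ) - 1) := by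
    have hcast : ((M - 1 : ℕ) : ℝ) = (M:ℝ) - 1 := by
      rw [Nat.cast_sub (by omega)]; norm_num
    rw [hBorda]
    simp only [hval0L, hcast]
    norm_num
  have hBj : ∀ j : Fin M, j ≠ ⟨0, by omega⟩ → Borda M σ j =
      (1/M) * (∑ k : Fin M, ((M:ℝ) - 1 - (k:ℕ))) - ε := by
    intro j hj
    rw [hBorda]
    simp only [hvaljL j hj]
    have h2 : 1 ≤ (j:ℕ) := by
      rcases Nat.eq_zero_or_pos (j:ℕ) with h|h
      · exact absurd (Fin.ext h) hj
      · omega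
    have hcast : (((j:ℕ) - 1 : ℕ) : ℝ) = ((j:ℕ):ℝ) - 1 := by
      rw [Nat.cast_sub h2]; norm_num
    simp only [hcast]
    ring
  have hBlt : ∀ j : Fin M, j ≠ ⟨0, by omega⟩ → Borda M σ j < Borda M σ ⟨0, by omega⟩ := by
    intro j hj
    have h2 : (2:ℝ) ≤ (M:ℝ) := by exact_mod_cast hM
    have h3 : (0:ℝ) < ε * ((M:ℝ) - 1) := mul_pos hε0 (by linarith)
    linarith [hBj j hj, hB0]
  refine ⟨σ, ⟨hσnonneg, hσsum⟩, htop0, htop1, htopj, hBlt, ?_⟩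
  intro π hπ0 hπ1 hπB α hα hcon
  have h10 : (⟨1, by omega⟩ : Fin M) ≠ ⟨0, by omega⟩ := by
    simp [Fin.ext_iff]
  have hπ1zero : π ⟨1, by omega⟩ = 0 := hπB _ ⟨⟨0, by omega⟩, hBlt _ h10⟩
  rw [hπ1zero, htop1] at hcon
  have hpos : 0 < 1 / (M:ℝ) - ε := by linarith
  nlinarith
end
end

section
/- Let M = 3, let σ_1 be the profile placing mass 1/3 on each of the rankings (y_1 ≻ y_2 ≻ y_3), (y_2 ≻ y_1 ≻ y_3), (y_3 ≻ y_1 ≻ y_2), and let σ_2 be the profile placing mass 2/3 on (y_1 ≻ y_2 ≻ y_3) and mass 1/3 on (y_3 ≻ y_2 ≻ y_1). Then the induced preference functions coincide, P^{σ_1}(y_i ≻ y_j) = P^{σ_2}(y_i ≻ y_j) for all i, j, while the top-choice share vectors differ: w^{σ_1} = (1/3, 1/3, 1/3) and w^{σ_2} = (2/3, 0, 1/3). Consequently, there is no function F defined on preference functions such that F(P^σ) = w^σ for every profile σ, i.e., the random dictatorship rule is not implementable from pairwise comparison data. -/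
open Finset

noncomputable section

lemma sum_perm3 (f : Equiv.Perm (Fin 3) → ℝ) :
    ∑ r : Equiv.Perm (Fin 3), f r =
    f 1 + f (Equiv.swap 0 1) + f (Equiv.swap 0 2) + f (Equiv.swap 1 2)
      + f (finRotate 3) + f (finRotate 3)⁻¹ := by
  have h : (Finset.univ : Finset (Equiv.Perm (Fin 3))) =
      {1, Equiv.swap 0 1, Equiv.swap 0 2, Equiv.swap 1 2, finRotate 3, (finRotate 3)⁻¹} := by decide
  rw [h, Finset.sum_insert (by decide), Finset.sum_insert (by decide),
    Finset.sum_insert (by decide), Finset.sum_insert (by decide),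
    Finset.sum_insert (by decide), Finset.sum_singleton]
  ring

/-- two profiles with the same induced preference function but
different top-choice share vectors, so no function of the preference function
can recover the top-choice shares (random dictatorship is not implementable). -/
theorem random_dictatorship_not_implementable :
    let r123 : Equiv.Perm (Fin 3) := 1
    let r213 : Equiv.Perm (Fin 3) := Equiv.swap 0 1
    let r312 : Equiv.Perm (Fin 3) := finRotate 3
    let r321 : Equiv.Perm (Fin 3) := Equiv.swap 0 2
    let σ₁ : Equiv.Perm (Fin 3) → ℝ := fun r =>
      if r = r123 then 1/3 else if r = r213 then 1/3 else if r = r312 then 1/3 else 0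
    let σ₂ : Equiv.Perm (Fin 3) → ℝ := fun r =>
      if r = r123 then 2/3 else if r = r321 then 1/3 else 0
    IsProfile 3 σ₁ ∧ IsProfile 3 σ₂ ∧
    (∀ i j : Fin 3, Pref 3 σ₁ i j = Pref 3 σ₂ i j) ∧
    (topShare 3 σ₁ 0 = 1/3 ∧ topShare 3 σ₁ 1 = 1/3 ∧ topShare 3 σ₁ 2 = 1/3) ∧
    (topShare 3 σ₂ 0 = 2/3 ∧ topShare 3 σ₂ 1 = 0 ∧ topShare 3 σ₂ 2 = 1/3) ∧
    ¬ ∃ F : (Fin 3 → Fin 3 → ℝ) → (Fin 3 → ℝ),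
        ∀ σ : Equiv.Perm (Fin 3) → ℝ, IsProfile 3 σ →
          F (fun i j => Pref 3 σ i j) = fun i => topShare 3 σ i := by
  intro r123 r213 r312 r321 σ₁ σ₂
  have hprof1 : IsProfile 3 σ₁ := by
    constructor
    · intro r; simp only [σ₁]; split_ifs <;> norm_num
    · simp (config := { decide := true }) only [σ₁, r123, r213, r312, r321, sum_perm3]
      norm_num
  have hprof2 : IsProfile 3 σ₂ := by
    constructor
    · intro r; simp only [σ₂]; split_ifs <;> norm_num
    · simp (config := { decide := true }) only [σ₂, r123, r213, r312, r321, sum_perm3]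
      norm_num
  have hP : ∀ i j : Fin 3, Pref 3 σ₁ i j = Pref 3 σ₂ i j := by
    intro i j
    fin_cases i <;> fin_cases j <;>
      · simp (config := { decide := true }) only [σ₁, r123, r213, r312, r321, σ₂, Pref, sum_perm3]
        norm_num
  have hw1 : topShare 3 σ₁ 0 = 1/3 ∧ topShare 3 σ₁ 1 = 1/3 ∧ topShare 3 σ₁ 2 = 1/3 := by
    refine ⟨?_, ?_, ?_⟩ <;>
      · simp (config := { decide := true }) only [σ₁, r123, r213, r312, r321, topShare, sum_perm3]
        norm_num
  have hw2 : topShare 3 σ₂ 0 = 2/3 ∧ topShare 3 σ₂ 1 = 0 ∧ topShare 3 σ₂ 2 = 1/3 := by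
    refine ⟨?_, ?_, ?_⟩ <;>
      · simp (config := { decide := true }) only [σ₂, r123, r213, r312, r321, topShare, sum_perm3]
        norm_num
  refine ⟨hprof1, hprof2, hP, hw1, hw2, ?_⟩
  rintro ⟨F, hF⟩
  have h1 := hF σ₁ hprof1
  have h2 := hF σ₂ hprof2
  have hPe : (fun i j => Pref 3 σ₁ i j) = (fun i j => Pref 3 σ₂ i j) := by
    funext i j; exact hP i j
  rw [hPe, h2] at h1
  have := congrFun h1 0
  rw [hw1.1, hw2.1] at this
  norm_num at this
end
end

section
/- Let P be a preference function induced by some profile over rankings of M alternatives and let w = (w_1, …, w_M) be a probability vector. Suppose there exist profiles σ_1, …, σ_M, each σ_k supported on rankings that place y_k first, such that P(y_i ≻ y_j) = Σ_{k=1}^M w_k · P^{σ_k}(y_i ≻ y_j) for all i ≠ j. Then for every i, w_i ≤ u_i := min_{j ≠ i} P(y_i ≻ y_j). In other words, the feasible set W(P) is contained in the polyhedral outer approximation { w : w_i ≤ u_i for all i }. -/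
open Finset

noncomputable section

/-- any feasible population share vector `w` for `P` satisfies
`w_i ≤ u_i := min_{j ≠ i} P(y_i ≻ y_j)`, i.e. `W(P) ⊆ 𝑊̄(P)`. -/
theorem feasible_shares_subset_outer_approx
    (M : ℕ) (hM : 2 ≤ M) (P : Fin M → Fin M → ℝ)
    (hP : ∃ σ₀ : Equiv.Perm (Fin M) → ℝ, IsProfile M σ₀ ∧ ∀ i j, P i j = Pref M σ₀ i j)
    (w : Fin M → ℝ) (hw0 : ∀ i, 0 ≤ w i) (hw1 : ∑ i, w i = 1)
    (τ : Fin M → Equiv.Perm (Fin M) → ℝ)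
    (hτ : ∀ k, IsProfile M (τ k))
    (hτs : ∀ k r, τ k r ≠ 0 → (r k : ℕ) = 0)
    (hmix : ∀ i j, i ≠ j → P i j = ∑ k, w k * Pref M (τ k) i j) :
    ∀ i, w i ≤ sInf {x : ℝ | ∃ j, j ≠ i ∧ x = P i j} := by

  intro i
  have hcard : 1 < Fintype.card (Fin M) := by simpa using (show 1 < M by omega)
  obtain ⟨j0, hj0⟩ := Fintype.exists_ne_of_one_lt_card hcard i
  have hPrefnn : ∀ k (a b : Fin M), 0 ≤ Pref M (τ k) a b := by
    intro k a b
    apply Finset.sum_nonneg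
    intro r _
    have := (hτ k).1 r
    positivity
  refine le_csInf ⟨P i j0, j0, hj0, rfl⟩ ?_
  rintro x ⟨j, hji, rfl⟩
  rw [hmix i j (Ne.symm hji)]
  have key : Pref M (τ i) i j = 1 := by
    have : Pref M (τ i) i j = ∑ r : Equiv.Perm (Fin M), τ i r := by
      apply Finset.sum_congr rfl
      intro r _
      by_cases h : τ i r = 0
      · simp [h]
      · have h0 := hτs i r h
        have hj0' : (r j : ℕ) ≠ 0 := by
          intro hc
          exact hji (r.injective (Fin.ext (by omega : (r j : ℕ) = (r i : ℕ))))
        have hlt : r i < r j := Fin.lt_def.mpr (by omega)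
        simp [hlt]
    rw [this, (hτ i).2]
  calc w i = w i * Pref M (τ i) i j := by rw [key]; ring
    _ ≤ ∑ k, w k * Pref M (τ k) i j := by
        apply Finset.single_le_sum (f := fun k => w k * Pref M (τ k) i j)
          (fun k _ => mul_nonneg (hw0 k) (hPrefnn k i j)) (Finset.mem_univ i)
end
end

section
/- Let P be an M×M real matrix with entries in [0,1] satisfying P_{ij} + P_{ji} = 1 for all i, j, and let w = (w_1, …, w_M) be a probability vector such that w_i ≤ min_{j ≠ i} P_{ij} for every i. Then there exist M×M matrices P^{(1)}, …, P^{(M)} with entries in [0,1] such that for every k: P^{(k)}_{ij} + P^{(k)}_{ji} = 1 for all i, j; P^{(k)}_{kj} = 1 and P^{(k)}_{jk} = 0 for all j ≠ k; and P_{ij} = Σ_{k=1}^M w_k · P^{(k)}_{ij} for all i, j. That is, in the extended setting where each group may report an arbitrary skew-symmetric pairwise preference function, the outer approximation is tight: every w with w_i ≤ min_{j≠i} P_{ij} is feasible. -/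
open Finset

noncomputable section

/-- in the extended setting of arbitrary skew-symmetric pairwise
preference matrices, the outer approximation is tight: any probability vector
`w` with `w_i ≤ min_{j ≠ i} P_{ij}` arises from a `w`-mixture of unanimous
group preference matrices. -/
theorem outer_approx_tight_extended
    (M : ℕ) (hM : 2 ≤ M) (P : Fin M → Fin M → ℝ)
    (hP01 : ∀ i j, P i j ∈ Set.Icc (0 : ℝ) 1)
    (hPskew : ∀ i j, P i j + P j i = 1)
    (w : Fin M → ℝ) (hw0 : ∀ i, 0 ≤ w i) (hw1 : ∑ i, w i = 1)
    (hwu : ∀ i j, j ≠ i → w i ≤ P i j) :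
    ∃ Q : Fin M → Fin M → Fin M → ℝ,
      (∀ k i j, Q k i j ∈ Set.Icc (0 : ℝ) 1) ∧
      (∀ k i j, Q k i j + Q k j i = 1) ∧
      (∀ k j, j ≠ k → Q k k j = 1 ∧ Q k j k = 0) ∧
      (∀ i j, P i j = ∑ k, w k * Q k i j) := by
  classical
  set q : Fin M → Fin M → ℝ := fun i j =>
    if 1 - w i - w j = 0 then 1/2 else (P i j - w i) / (1 - w i - w j) with hq
  have hWnn : ∀ i j : Fin M, i ≠ j → 0 ≤ 1 - w i - w j := by
    intro i j hij
    have h1 := hwu i j (Ne.symm hij)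
    have h2 := hwu j i hij
    have h3 := hPskew i j
    linarith
  have hnum : ∀ i j : Fin M, i ≠ j → 0 ≤ P i j - w i := by
    intro i j hij
    have := hwu i j (Ne.symm hij); linarith
  have hq01 : ∀ i j : Fin M, i ≠ j → q i j ∈ Set.Icc (0:ℝ) 1 := by
    intro i j hij
    simp only [hq]
    by_cases hW : 1 - w i - w j = 0
    · simp [hW]; norm_num
    · simp only [hW, if_false]
      have hWpos : 0 < 1 - w i - w j := lt_of_le_of_ne (hWnn i j hij) (Ne.symm hW)
      constructor
      · exact div_nonneg (hnum i j hij) hWpos.le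
      · rw [div_le_one hWpos]
        have := hnum j i hij.symm
        have := hPskew i j
        linarith
  have hqskew : ∀ i j : Fin M, i ≠ j → q i j + q j i = 1 := by
    intro i j hij
    simp only [hq]
    have hc : 1 - w j - w i = 1 - w i - w j := by ring
    rw [hc]
    by_cases hW : 1 - w i - w j = 0
    · simp [hW]; norm_num
    · simp only [hW, if_false]
      rw [← add_div, div_eq_one_iff_eq hW]
      have := hPskew i j; linarith
  refine ⟨fun k i j => if i = j then 1/2 else if k = i then 1 else if k = j then 0 else q i j,
    ?_, ?_, ?_, ?_⟩
  · intro k i j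
    by_cases hij : i = j
    · simp [hij]; norm_num
    · simp only [hij, if_false]
      by_cases hki : k = i
      · simp [hki]
      · by_cases hkj : k = j
        · simp [hki, hkj, Ne.symm hij]
        · simp only [hki, hkj, if_false]; exact hq01 i j hij
  · intro k i j
    by_cases hij : i = j
    · simp [hij]; norm_num
    · have hji : j ≠ i := Ne.symm hij
      simp only [hij, hji, if_false]
      by_cases hki : k = i
      · have hkj : k ≠ j := by rw [hki]; exact hij
        simp [hki, hij]
      · by_cases hkj : k = j
        · simp [hkj, hki, hji]
        · simp only [hki, hkj, if_false]; exact hqskew i j hij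
  · intro k j hjk
    have hkj : k ≠ j := Ne.symm hjk
    simp [hkj, hjk]
  · intro i j
    by_cases hij : i = j
    · subst hij
      have h := hPskew i i
      have : P i i = 1/2 := by linarith
      rw [this]
      simp only [eq_self_iff_true, if_true]
      rw [← Finset.sum_mul, hw1, one_mul]
    · simp only [hij, if_false]
      have hji : j ≠ i := Ne.symm hij
      have hmem_i : i ∈ Finset.univ (α := Fin M) := Finset.mem_univ i
      have hmem_j : j ∈ (Finset.univ (α := Fin M)).erase i := by
        simp [hji]
      rw [← Finset.add_sum_erase _ _ hmem_i, ← Finset.add_sum_erase _ _ hmem_j]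
      simp only [eq_self_iff_true, if_true, hji, if_false]
      have hrest : ∀ k ∈ ((Finset.univ (α := Fin M)).erase i).erase j,
          w k * (if k = i then 1 else if k = j then 0 else q i j) = w k * q i j := by
        intro k hk
        have hkj : k ≠ j := (Finset.mem_erase.mp hk).1
        have hki : k ≠ i := (Finset.mem_erase.mp (Finset.mem_erase.mp hk).2).1
        rw [if_neg hki, if_neg hkj]
      rw [Finset.sum_congr rfl hrest, ← Finset.sum_mul]
      have hsum : ∑ k ∈ ((Finset.univ (α := Fin M)).erase i).erase j, w k
          = 1 - w i - w j := by
        have h1 : ∑ k ∈ (Finset.univ (α := Fin M)).erase i, w k = 1 - w i := by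
          have := Finset.add_sum_erase Finset.univ w hmem_i
          rw [hw1] at this; linarith
        have h2 := Finset.add_sum_erase ((Finset.univ (α := Fin M)).erase i) w hmem_j
        rw [h1] at h2; linarith
      rw [hsum]
      simp only [hq]
      by_cases hW : 1 - w i - w j = 0
      · have h1 := hnum i j hij
        have h2 := hnum j i hji
        have h3 := hPskew i j
        have hPeq : P i j = w i := by linarith
        rw [if_pos hW, hW, hPeq]
        ring
      · rw [if_neg hW]
        field_simp
        ring
end
end

section
/- Let M ≥ 2. Suppose α is a real number and F is a function that assigns to each preference function induced by a profile a probability distribution over the M alternatives, such that for every profile σ and every i, F(P^σ)(y_i) ≥ α · w^σ_i. Then α ≤ 2/M. That is, no preference-learning algorithm can guarantee population-proportional alignment with a uniform constant exceeding 2/M. -/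
open Finset

noncomputable section

/-- Helper: sum of a two-point weighted function over all permutations. -/
lemma sum_two {β : Type*} [Fintype β] [DecidableEq β] (a b : β) (hab : a ≠ b)
    (g : β → ℝ) :
    ∑ r : β, (if r = a then (1/2 : ℝ) else if r = b then 1/2 else 0) * g r
      = (1/2) * g a + (1/2) * g b := by
  have key : ∀ r : β,
      (if r = a then (1/2 : ℝ) else if r = b then 1/2 else 0) * g r
        = (if r = a then (1/2) * g r else 0) + (if r = b then (1/2) * g r else 0) := by
    intro r
    by_cases h1 : r = a
    · subst h1
      simp [hab]
    · by_cases h2 : r = b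
      · subst h2
        simp [Ne.symm hab]
      · simp [h1, h2]
  rw [Finset.sum_congr rfl (fun r _ => key r), Finset.sum_add_distrib,
    Finset.sum_ite_eq' , Finset.sum_ite_eq']
  simp

/-- no preference-learning algorithm (a map from induced
preference functions to probability distributions over alternatives) can
guarantee `F(P^σ)(y_i) ≥ α · w^σ_i` for all profiles with a constant
`α > 2/M`. -/
theorem no_uniform_PPA_above_two_over_M
    (M : ℕ) (hM : 2 ≤ M) (α : ℝ)
    (F : (Fin M → Fin M → ℝ) → Fin M → ℝ)
    (hdist : ∀ σ : Equiv.Perm (Fin M) → ℝ, IsProfile M σ →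
      (∀ i, 0 ≤ F (Pref M σ) i) ∧ ∑ i, F (Pref M σ) i = 1)
    (hppa : ∀ σ : Equiv.Perm (Fin M) → ℝ, IsProfile M σ →
      ∀ i, α * topShare M σ i ≤ F (Pref M σ) i) :
    α ≤ 2 / M := by
  haveI : NeZero M := ⟨by omega⟩
  set rv : Fin M → Equiv.Perm (Fin M) := fun i => Equiv.swap 0 i with hrv
  set sv : Fin M → Equiv.Perm (Fin M) := fun i => (Equiv.swap 0 i).trans Fin.revPerm
    with hsv
  have hrvi : ∀ i, rv i i = 0 := fun i => Equiv.swap_apply_right 0 i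
  have hsvi : ∀ i, ((sv i i : Fin M) : ℕ) = M - 1 := by
    intro i
    simp [hsv, Equiv.swap_apply_right, Fin.val_rev]
  have hne : ∀ i, rv i ≠ sv i := by
    intro i h
    have h1 : ((rv i i : Fin M) : ℕ) = ((sv i i : Fin M) : ℕ) := by rw [h]
    rw [hrvi, hsvi] at h1
    simp at h1
    omega
  set σ : Fin M → Equiv.Perm (Fin M) → ℝ :=
    fun i r => if r = rv i then 1/2 else if r = sv i then 1/2 else 0 with hσ
  have hprofile : ∀ i, IsProfile M (σ i) := by
    intro i
    constructor
    · intro r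
      simp only [hσ]
      split_ifs <;> norm_num
    · have h := sum_two (rv i) (sv i) (hne i) (fun _ => (1 : ℝ))
      simp only [mul_one] at h
      rw [show (1/2 : ℝ) + 1/2 = 1 by norm_num] at h
      exact h
  have hPref : ∀ i, Pref M (σ i) = fun a b => if a = b then (0 : ℝ) else 1/2 := by
    intro i
    funext a b
    unfold Pref
    rw [sum_two (rv i) (sv i) (hne i)]
    by_cases hab : a = b
    · subst hab
      simp
    · have h1 : sv i a < sv i b ↔ rv i b < rv i a := by
        simp [hsv, hrv, Fin.rev_lt_rev]
      have h2 : rv i a ≠ rv i b := fun h => hab ((rv i).injective h)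
      rcases lt_or_gt_of_ne h2 with h | h
      · simp [hab, h, h1, not_lt_of_gt h]
      · simp [hab, h, h1, not_lt_of_gt h]
  have hTop : ∀ i, topShare M (σ i) i = 1/2 := by
    intro i
    unfold topShare
    have key : ∀ r : Equiv.Perm (Fin M),
        (if ((r i : Fin M) : ℕ) = 0 then σ i r else 0)
          = (if r = rv i then (1/2 : ℝ) else 0) := by
      intro r
      by_cases h1 : r = rv i
      · subst h1
        simp [hσ, hrvi i]
      · by_cases h2 : r = sv i
        · subst h2
          have : ((sv i i : Fin M) : ℕ) ≠ 0 := by rw [hsvi]; omega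
          simp [this, h1]
        · simp [hσ, h1, h2]
    rw [Finset.sum_congr rfl (fun r _ => key r), Finset.sum_ite_eq']
    simp
  -- All profiles induce the same preference function
  set Q : Fin M → Fin M → ℝ := fun a b => if a = b then (0 : ℝ) else 1/2 with hQ
  have hlow : ∀ i, α * (1/2) ≤ F Q i := by
    intro i
    have := hppa (σ i) (hprofile i) i
    rw [hTop i, hPref i] at this
    exact this
  have hsum : ∑ i : Fin M, F Q i = 1 := by
    have := (hdist (σ 0) (hprofile 0)).2
    rw [hPref 0] at this
    exact this
  have hMsum : ∑ i : Fin M, α * (1/2) ≤ ∑ i : Fin M, F Q i :=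
    Finset.sum_le_sum (fun i _ => hlow i)
  rw [hsum, Finset.sum_const, Finset.card_univ, Fintype.card_fin] at hMsum
  have hMpos : (0 : ℝ) < M := by positivity
  rw [nsmul_eq_mul] at hMsum
  rw [le_div_iff₀ hMpos]
  nlinarith [hMsum]
end
end

section
/- Let σ be a profile over rankings of M alternatives and suppose that for every ranking r with σ_r > 0 we have r(y_i) < r(y_j). Then u_j = 0 and hence Φ*(σ)(y_j) = 0 ≤ Φ*(σ)(y_i); that is, the policy Φ* is Pareto efficient. -/
open Finset

noncomputable section

lemma pref_nonneg (M : ℕ) (σ : Equiv.Perm (Fin M) → ℝ) (hσ : IsProfile M σ)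
    (i j : Fin M) : 0 ≤ Pref M σ i j := by
  apply Finset.sum_nonneg
  intro r _
  have := hσ.1 r
  positivity

lemma minPrefSet_nonempty (M : ℕ) (hM : 2 ≤ M) (σ : Equiv.Perm (Fin M) → ℝ) (i : Fin M) :
    {x : ℝ | ∃ j, j ≠ i ∧ x = Pref M σ i j}.Nonempty := by
  have : 1 < Fintype.card (Fin M) := by simp; omega
  obtain ⟨k, hk⟩ := Fintype.exists_ne_of_one_lt_card this i
  exact ⟨Pref M σ i k, k, hk, rfl⟩

lemma minPrefSet_bddBelow (M : ℕ) (σ : Equiv.Perm (Fin M) → ℝ) (hσ : IsProfile M σ)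
    (i : Fin M) : BddBelow {x : ℝ | ∃ j, j ≠ i ∧ x = Pref M σ i j} := by
  refine ⟨0, ?_⟩
  rintro x ⟨k, _, rfl⟩
  exact pref_nonneg M σ hσ i k

lemma minPref_nonneg (M : ℕ) (hM : 2 ≤ M) (σ : Equiv.Perm (Fin M) → ℝ)
    (hσ : IsProfile M σ) (i : Fin M) : 0 ≤ minPref M σ i := by
  apply le_csInf (minPrefSet_nonempty M hM σ i)
  rintro x ⟨k, _, rfl⟩
  exact pref_nonneg M σ hσ i k

lemma topShare_le_minPref (M : ℕ) (hM : 2 ≤ M) (σ : Equiv.Perm (Fin M) → ℝ)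
    (hσ : IsProfile M σ) (i : Fin M) : topShare M σ i ≤ minPref M σ i := by
  apply le_csInf (minPrefSet_nonempty M hM σ i)
  rintro x ⟨k, hk, rfl⟩
  apply Finset.sum_le_sum
  intro r _
  by_cases hr : (r i : ℕ) = 0
  · simp only [hr, if_pos]
    have hne : r k ≠ r i := fun hc => hk (r.injective hc)
    have : r i < r k := by
      have : (r i : ℕ) ≤ (r k : ℕ) := by omega
      omega
    simp [this]
  · simp only [hr, if_neg, not_false_iff]
    have := hσ.1 r
    positivity

lemma sum_topShare (M : ℕ) (hM : 2 ≤ M) (σ : Equiv.Perm (Fin M) → ℝ)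
    (hσ : IsProfile M σ) : ∑ k : Fin M, topShare M σ k = 1 := by
  unfold topShare
  rw [Finset.sum_comm]
  rw [← hσ.2]
  apply Finset.sum_congr rfl
  intro r _
  have h0 : (0 : ℕ) < M := by omega
  rw [Finset.sum_eq_single_of_mem (r.symm ⟨0, h0⟩) (Finset.mem_univ _)]
  · simp
  · intro k _ hk
    rw [if_neg]
    intro hc
    apply hk
    have : r k = ⟨0, h0⟩ := by
      apply Fin.ext
      simpa using hc
    rw [← this]; simp

lemma sum_minPref_pos (M : ℕ) (hM : 2 ≤ M) (σ : Equiv.Perm (Fin M) → ℝ)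
    (hσ : IsProfile M σ) : 0 < ∑ k : Fin M, minPref M σ k := by
  have : (1 : ℝ) ≤ ∑ k : Fin M, minPref M σ k := by
    rw [← sum_topShare M hM σ hσ]
    exact Finset.sum_le_sum fun k _ => topShare_le_minPref M hM σ hσ k
  linarith

/-- if every ranking in the support of `σ` places `y_i` above
`y_j`, then `u_j = 0` and hence `Φ*(σ)(y_j) = 0 ≤ Φ*(σ)(y_i)`: the policy
`Φ*` is Pareto efficient. -/
theorem phiStar_pareto_efficient
    (M : ℕ) (hM : 2 ≤ M) (σ : Equiv.Perm (Fin M) → ℝ) (hσ : IsProfile M σ)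
    (i j : Fin M) (h : ∀ r : Equiv.Perm (Fin M), 0 < σ r → r i < r j) :
    minPref M σ j = 0 ∧ PhiStar M σ j = 0 ∧ PhiStar M σ j ≤ PhiStar M σ i := by
  -- there is a ranking with positive mass
  have hex : ∃ r : Equiv.Perm (Fin M), 0 < σ r := by
    by_contra hc
    push_neg at hc
    have : ∀ r : Equiv.Perm (Fin M), σ r = 0 := fun r => le_antisymm (hc r) (hσ.1 r)
    have h2 := hσ.2
    rw [Finset.sum_congr rfl (fun r _ => this r)] at h2
    simp at h2
  obtain ⟨r₀, hr₀⟩ := hex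
  have hij : i ≠ j := by
    intro hc
    have := h r₀ hr₀
    rw [hc] at this
    exact lt_irrefl _ this
  -- Pref M σ j i = 0
  have hPji : Pref M σ j i = 0 := by
    apply Finset.sum_eq_zero
    intro r _
    rcases lt_or_eq_of_le (hσ.1 r) with hpos | hzero
    · have := h r hpos
      have : ¬ (r j < r i) := by omega
      simp [this]
    · simp [← hzero]
  have hminj : minPref M σ j = 0 := by
    apply le_antisymm
    · apply csInf_le (minPrefSet_bddBelow M σ hσ j)
      exact ⟨i, hij, hPji.symm⟩
    · exact minPref_nonneg M hM σ hσ j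
  refine ⟨hminj, ?_, ?_⟩
  · unfold PhiStar
    rw [hminj, zero_div]
  · unfold PhiStar
    rw [hminj, zero_div]
    apply div_nonneg (minPref_nonneg M hM σ hσ i)
    exact le_of_lt (sum_minPref_pos M hM σ hσ)
end
end

section
/- For every profile σ over rankings of M alternatives and every index i, the policy π := Φ*(σ) satisfies π(y_i) · Σ_{j=1}^M u_j ≥ w^σ_i; equivalently, whenever w^σ_i > 0, the proportionality ratio satisfies π(y_i)/w^σ_i ≥ (Σ_{j=1}^M u_j)^{-1}. -/
open Finset

noncomputable section

/-- the policy `π = Φ*(σ)` satisfies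
`π(y_i) · Σ_j u_j ≥ w^σ_i`; equivalently, whenever `w^σ_i > 0`,
`π(y_i)/w^σ_i ≥ (Σ_j u_j)⁻¹`. -/
theorem phiStar_PPA_lower_bound
    (M : ℕ) (hM : 2 ≤ M) (σ : Equiv.Perm (Fin M) → ℝ) (hσ : IsProfile M σ)
    (i : Fin M) :
    topShare M σ i ≤ PhiStar M σ i * ∑ j, minPref M σ j ∧
    (0 < topShare M σ i →
      (∑ j, minPref M σ j)⁻¹ ≤ PhiStar M σ i / topShare M σ i) := by

  obtain ⟨hpos, hone⟩ := hσ
  have h0 : (0:ℕ) < M := by omega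
  haveI : Nontrivial (Fin M) := Fin.nontrivial_iff_two_le.mpr hM
  have hw_le_pref : ∀ (k j : Fin M), j ≠ k → topShare M σ k ≤ Pref M σ k j := by
    intro k j hj
    unfold topShare Pref
    apply Finset.sum_le_sum
    intro r _
    by_cases h : (r k : ℕ) = 0
    · have hne' : (r j : ℕ) ≠ 0 := by
        intro h'
        exact hj (r.injective (Fin.ext (by omega)))
      have hlt : r k < r j := by rw [Fin.lt_def]; omega
      simp [h, hlt]
    · simp only [h, if_neg, if_false]
      exact mul_nonneg (hpos r) (by split <;> norm_num)
  have hwu : ∀ k, topShare M σ k ≤ minPref M σ k := by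
    intro k
    apply le_csInf
    · obtain ⟨j, hj⟩ := exists_ne k
      exact ⟨_, j, hj, rfl⟩
    · rintro x ⟨j, hj, rfl⟩
      exact hw_le_pref k j hj
  have hwsum : ∑ j : Fin M, topShare M σ j = 1 := by
    unfold topShare
    rw [Finset.sum_comm, ← hone]
    refine Finset.sum_congr rfl fun r _ => ?_
    have hiff : ∀ j : Fin M, ((r j : ℕ) = 0) ↔ j = r.symm ⟨0, h0⟩ := by
      intro j
      rw [Equiv.eq_symm_apply]
      constructor
      · intro h; exact Fin.ext h
      · intro h; rw [h]
    simp only [hiff]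
    rw [Finset.sum_ite_eq' Finset.univ (r.symm ⟨0, h0⟩) (fun _ => σ r)]
    simp
  have hsumu : (1:ℝ) ≤ ∑ j, minPref M σ j := by
    rw [← hwsum]; exact Finset.sum_le_sum fun j _ => hwu j
  have hsumpos : (0:ℝ) < ∑ j, minPref M σ j := lt_of_lt_of_le one_pos hsumu
  constructor
  · rw [PhiStar, div_mul_cancel₀ _ hsumpos.ne']
    exact hwu i
  · intro hw
    rw [PhiStar, div_div, le_div_iff₀ (by positivity)]
    rw [inv_mul_cancel_left₀ hsumpos.ne']
    exact hwu i
end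
end

section
/- Let σ be a profile over rankings of M ≥ 2 alternatives and let δ ∈ [0,1]. Call an alternative y_i δ-dominated if there exists j ≠ i with P^σ(y_j ≻ y_i) ≥ δ, let N^σ_δ denote the number of alternatives that are not δ-dominated, and let w^{σ,1} and w^{σ,2} denote the largest and second-largest entries of the top-choice share vector w^σ. Assume there is an alternative attaining the maximal share w^{σ,1} that is not δ-dominated. Then 1 ≤ Σ_{i=1}^M u_i ≤ (N^σ_δ − 1)(1 − w^{σ,1}) + (1 − w^{σ,2}) + (M − N^σ_δ)(1 − δ); equivalently, (Σ_{i=1}^M u_i)^{-1} lies in the interval [ ((N^σ_δ − 1)(1 − w^{σ,1}) + (1 − w^{σ,2}) + (M − N^σ_δ)(1 − δ))^{-1}, 1 ]. -/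
open Finset

noncomputable section

section AuxLemmas
variable {M : ℕ} {σ : Equiv.Perm (Fin M) → ℝ}

lemma aux_pref_add (hσ : IsProfile M σ) {i j : Fin M} (hij : i ≠ j) :
    Pref M σ i j + Pref M σ j i = 1 := by
  unfold Pref
  rw [← Finset.sum_add_distrib]
  have key : ∀ r ∈ Finset.univ,
      σ r * (if r i < r j then (1:ℝ) else 0) + σ r * (if r j < r i then (1:ℝ) else 0) = σ r := by
    intro r _
    have hne : r i ≠ r j := fun h => hij (r.injective h)
    rcases lt_or_gt_of_ne hne with h | h
    · rw [if_pos h, if_neg (not_lt_of_gt h)]; ring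
    · rw [if_neg (not_lt_of_gt h), if_pos h]; ring
  rw [Finset.sum_congr rfl key, hσ.2]

lemma aux_top_le_pref (hσ : IsProfile M σ) {i j : Fin M} (hj : j ≠ i) :
    topShare M σ i ≤ Pref M σ i j := by
  unfold topShare Pref
  refine Finset.sum_le_sum fun r _ => ?_
  by_cases h : (r i : ℕ) = 0
  · rw [if_pos h]
    have hlt : r i < r j := by
      have hne : r j ≠ r i := fun hh => hj (r.injective hh)
      rw [Fin.lt_def, h]
      exact Nat.pos_of_ne_zero fun hh => hne (Fin.ext (hh.trans h.symm))
    rw [if_pos hlt, mul_one]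
  · rw [if_neg h]
    exact mul_nonneg (hσ.1 r) (by split <;> norm_num)


lemma aux_top_nonneg (hσ : IsProfile M σ) (i : Fin M) : 0 ≤ topShare M σ i := by
  unfold topShare
  refine Finset.sum_nonneg fun r _ => ?_
  split
  · exact hσ.1 r
  · exact le_refl 0

lemma aux_sum_top (hM : 2 ≤ M) (hσ : IsProfile M σ) :
    ∑ i : Fin M, topShare M σ i = 1 := by
  unfold topShare
  rw [Finset.sum_comm, ← hσ.2]
  refine Finset.sum_congr rfl fun r _ => ?_
  have hM0 : 0 < M := by omega
  have key : ∀ i : Fin M, ((r i : ℕ) = 0) ↔ i = r.symm ⟨0, hM0⟩ := by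
    intro i
    rw [Equiv.eq_symm_apply]
    constructor
    · intro h; exact (Fin.ext h.symm).symm
    · intro h; rw [h]
  calc ∑ i : Fin M, (if (r i : ℕ) = 0 then σ r else 0)
      = ∑ i : Fin M, (if i = r.symm ⟨0, hM0⟩ then σ r else 0) := by
        refine Finset.sum_congr rfl fun i _ => ?_
        simp only [key i]
    _ = σ r := by rw [Finset.sum_ite_eq' Finset.univ _ (fun _ => σ r)]; simp

lemma aux_set_fin (i : Fin M) :
    {x : ℝ | ∃ j, j ≠ i ∧ x = Pref M σ i j}.Finite := by
  have : {x : ℝ | ∃ j, j ≠ i ∧ x = Pref M σ i j}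
      ⊆ (fun j => Pref M σ i j) '' Set.univ := by
    rintro x ⟨j, _, rfl⟩; exact ⟨j, Set.mem_univ j, rfl⟩
  exact Set.Finite.subset (Set.Finite.image _ (Set.finite_univ)) this

lemma aux_set_ne (hM : 2 ≤ M) (i : Fin M) :
    {x : ℝ | ∃ j, j ≠ i ∧ x = Pref M σ i j}.Nonempty := by
  haveI : Nontrivial (Fin M) := Fin.nontrivial_iff_two_le.mpr hM
  obtain ⟨j, hj⟩ := exists_ne i
  exact ⟨Pref M σ i j, j, hj, rfl⟩

lemma aux_top_le_minPref (hM : 2 ≤ M) (hσ : IsProfile M σ) (i : Fin M) :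
    topShare M σ i ≤ minPref M σ i := by
  refine le_csInf (aux_set_ne hM i) ?_
  rintro x ⟨j, hj, rfl⟩
  exact aux_top_le_pref hσ hj

lemma aux_minPref_le (hM : 2 ≤ M) (hσ : IsProfile M σ) {i j : Fin M} (hj : j ≠ i) :
    minPref M σ i ≤ Pref M σ i j := by
  refine csInf_le (Set.Finite.bddBelow (aux_set_fin i)) ⟨j, hj, rfl⟩

/-- with `N^σ_δ` the number of alternatives that are not
`δ`-dominated, and `w^{σ,1}, w^{σ,2}` the largest and second-largest
top-choice shares (the largest being attained by some non-`δ`-dominated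
alternative `k`), we have
`1 ≤ Σ_i u_i ≤ (N^σ_δ − 1)(1 − w^{σ,1}) + (1 − w^{σ,2}) + (M − N^σ_δ)(1 − δ)`. -/
theorem sum_u_bounds
    (M : ℕ) (hM : 2 ≤ M) (σ : Equiv.Perm (Fin M) → ℝ) (hσ : IsProfile M σ)
    (δ : ℝ) (hδ : δ ∈ Set.Icc (0 : ℝ) 1)
    (dominated : Fin M → Prop)
    (hdom : ∀ i, dominated i ↔ ∃ j, j ≠ i ∧ δ ≤ Pref M σ j i)
    (N : ℕ) (hN : N = {i : Fin M | ¬ dominated i}.ncard)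
    (k l : Fin M)
    (hk : ∀ j, topShare M σ j ≤ topShare M σ k)
    (hknd : ¬ dominated k)
    (hl : l ≠ k) (hlmax : ∀ j, j ≠ k → topShare M σ j ≤ topShare M σ l) :
    1 ≤ ∑ i, minPref M σ i ∧
    ∑ i, minPref M σ i ≤
      ((N : ℝ) - 1) * (1 - topShare M σ k) + (1 - topShare M σ l)
        + ((M : ℝ) - N) * (1 - δ) := by
  classical
  constructor
  · calc (1 : ℝ) = ∑ i : Fin M, topShare M σ i := (aux_sum_top hM hσ).symm
      _ ≤ ∑ i, minPref M σ i :=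
          Finset.sum_le_sum fun i _ => aux_top_le_minPref hM hσ i
  · -- upper bound
    set D : Finset (Fin M) := Finset.univ.filter (fun i => ¬ dominated i) with hD
    have hDcard : D.card = N := by
      rw [hN]
      have : {i : Fin M | ¬ dominated i} = ↑D := by
        ext i; simp [hD]
      rw [this, Set.ncard_coe_finset]
    have hkD : k ∈ D := by simp [hD, hknd]
    have hN1 : 1 ≤ N := by
      rw [← hDcard]; exact Finset.card_pos.mpr ⟨k, hkD⟩
    -- bound for dominated i
    have hdom_bound : ∀ i ∈ Finset.univ.filter (fun i => dominated i),
        minPref M σ i ≤ 1 - δ := by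
      intro i hi
      rw [Finset.mem_filter] at hi
      obtain ⟨j, hj, hδj⟩ := (hdom i).mp hi.2
      have h1 : minPref M σ i ≤ Pref M σ i j := aux_minPref_le hM hσ hj
      have h2 : Pref M σ i j + Pref M σ j i = 1 := aux_pref_add hσ (Ne.symm hj)
      linarith
    -- bound for non-dominated i ≠ k
    have hnd_bound : ∀ i ∈ D.erase k, minPref M σ i ≤ 1 - topShare M σ k := by
      intro i hi
      have hik : i ≠ k := (Finset.mem_erase.mp hi).1
      have h1 : minPref M σ i ≤ Pref M σ i k := aux_minPref_le hM hσ hik.symm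
      have h2 : Pref M σ i k + Pref M σ k i = 1 := aux_pref_add hσ hik
      have h3 : topShare M σ k ≤ Pref M σ k i := aux_top_le_pref hσ hik
      linarith
    have hk_bound : minPref M σ k ≤ 1 - topShare M σ l := by
      have h1 : minPref M σ k ≤ Pref M σ k l := aux_minPref_le hM hσ hl
      have h2 : Pref M σ k l + Pref M σ l k = 1 := aux_pref_add hσ hl.symm
      have h3 : topShare M σ l ≤ Pref M σ l k := aux_top_le_pref hσ hl.symm
      linarith
    -- split the sum
    have hsplit : ∑ i, minPref M σ i
        = ∑ i ∈ D, minPref M σ i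
          + ∑ i ∈ Finset.univ.filter (fun i => dominated i), minPref M σ i := by
      rw [add_comm]
      exact (Finset.sum_filter_add_sum_filter_not Finset.univ (fun i => dominated i) _).symm
    have hDsplit : ∑ i ∈ D, minPref M σ i
        = ∑ i ∈ D.erase k, minPref M σ i + minPref M σ k :=
      (Finset.sum_erase_add D _ hkD).symm
    have hcard_dom : (Finset.univ.filter (fun i => dominated i)).card = M - N := by
      have := Finset.card_filter_add_card_filter_not
        (s := (Finset.univ : Finset (Fin M))) (p := fun i => dominated i)
      simp only [Finset.card_univ, Fintype.card_fin] at this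
      have hD' : (Finset.univ.filter (fun i => ¬ dominated i)).card = N := hDcard
      omega
    have hNM : N ≤ M := by
      rw [← hDcard]
      exact (Finset.card_filter_le _ _).trans (by simp)
    have hsum1 : ∑ i ∈ D.erase k, minPref M σ i
        ≤ ((N : ℝ) - 1) * (1 - topShare M σ k) := by
      have := Finset.sum_le_card_nsmul (D.erase k) _ (1 - topShare M σ k) hnd_bound
      rw [Finset.card_erase_of_mem hkD, hDcard] at this
      rw [nsmul_eq_mul] at this
      have hcast : ((N - 1 : ℕ) : ℝ) = (N : ℝ) - 1 := by
        rw [Nat.cast_sub hN1]; norm_num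
      rwa [hcast] at this
    have hsum2 : ∑ i ∈ Finset.univ.filter (fun i => dominated i), minPref M σ i
        ≤ ((M : ℝ) - N) * (1 - δ) := by
      have := Finset.sum_le_card_nsmul _ _ (1 - δ) hdom_bound
      rw [hcard_dom, nsmul_eq_mul] at this
      have hcast : ((M - N : ℕ) : ℝ) = (M : ℝ) - N := by
        rw [Nat.cast_sub hNM]
      rwa [hcast] at this
    rw [hsplit, hDsplit]
    linarith
end AuxLemmas
end
end

section
/- Let σ be a profile over rankings of M alternatives with top-choice shares w^σ, and write σ = Σ_{j=1}^M w^σ_j σ_j, where σ_j is the conditional profile of σ on the set of rankings placing y_j first (defined whenever w^σ_j > 0). Fix k and let τ be an arbitrary profile (the manipulation of group k), and let σ' := Σ_{j ≠ k} w^σ_j σ_j + w^σ_k τ. Then the manipulated policy satisfies Φ*(σ')(y_k) ≤ (w^σ_k + 1)/2. In other words, Φ* satisfies population-bounded manipulability with γ(w) = (w + 1)/2. -/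
open Finset

noncomputable section

/-- population-bounded manipulability of `Φ*`: if group `k`
(of share `w^σ_k`) replaces its conditional sub-profile by an arbitrary
profile `τ`, the manipulated policy satisfies
`Φ*(σ')(y_k) ≤ (w^σ_k + 1)/2`. -/
theorem phiStar_population_bounded_manipulability
    (M : ℕ) (hM : 2 ≤ M) (σ : Equiv.Perm (Fin M) → ℝ) (hσ : IsProfile M σ)
    (σg : Fin M → Equiv.Perm (Fin M) → ℝ)
    (hσg : ∀ j, IsProfile M (σg j))
    (hsupp : ∀ j r, σg j r ≠ 0 → (r j : ℕ) = 0)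
    (hdec : ∀ r, σ r = ∑ j, topShare M σ j * σg j r)
    (k : Fin M) (τ : Equiv.Perm (Fin M) → ℝ) (hτ : IsProfile M τ)
    (σ' : Equiv.Perm (Fin M) → ℝ)
    (hσ' : ∀ r, σ' r = (∑ j ∈ Finset.univ.erase k, topShare M σ j * σg j r)
        + topShare M σ k * τ r) :
    PhiStar M σ' k ≤ (topShare M σ k + 1) / 2 := by
  haveI : NeZero M := ⟨by omega⟩
  set w := topShare M σ with hw
  have hw_nonneg : ∀ j, 0 ≤ w j := by
    intro j
    apply Finset.sum_nonneg
    intro r _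
    split_ifs
    · exact hσ.1 r
    · exact le_refl 0
  have hw_sum : ∑ j, w j = 1 := by
    have hinner : ∀ r : Equiv.Perm (Fin M),
        ∑ j, (if (r j : ℕ) = 0 then σ r else 0) = σ r := by
      intro r
      rw [Finset.sum_eq_single (r.symm 0)]
      · simp
      · intro j _ hj
        rw [if_neg]
        intro h
        apply hj
        have h0 : r j = 0 := Fin.ext (by simpa using h)
        rw [← h0, Equiv.symm_apply_apply]
      · intro h; exact absurd (Finset.mem_univ _) h
    calc ∑ j, w j = ∑ r : Equiv.Perm (Fin M), ∑ j, (if (r j : ℕ) = 0 then σ r else 0) := by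
          rw [Finset.sum_comm]; rfl
      _ = ∑ r : Equiv.Perm (Fin M), σ r := Finset.sum_congr rfl fun r _ => hinner r
      _ = 1 := hσ.2
  have hσ'_nonneg : ∀ r, 0 ≤ σ' r := by
    intro r
    rw [hσ' r]
    apply add_nonneg
    · exact Finset.sum_nonneg fun j _ => mul_nonneg (hw_nonneg j) ((hσg j).1 r)
    · exact mul_nonneg (hw_nonneg k) (hτ.1 r)
  have hσ'_sum : ∑ r : Equiv.Perm (Fin M), σ' r = 1 := by
    have h1 : ∑ r : Equiv.Perm (Fin M), σ' r
        = (∑ j ∈ Finset.univ.erase k, w j * ∑ r : Equiv.Perm (Fin M), σg j r)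
          + w k * ∑ r : Equiv.Perm (Fin M), τ r := by
      simp only [hσ', Finset.sum_add_distrib, Finset.mul_sum]
      rw [Finset.sum_comm]
    rw [h1, hτ.2, mul_one]
    have h2 : ∀ j ∈ Finset.univ.erase k, w j * ∑ r : Equiv.Perm (Fin M), σg j r = w j :=
      fun j _ => by rw [(hσg j).2, mul_one]
    rw [Finset.sum_congr rfl h2, Finset.sum_erase_add _ _ (Finset.mem_univ k), hw_sum]
  -- basic facts about Pref of σ'
  have hPref_nonneg : ∀ i j : Fin M, 0 ≤ Pref M σ' i j := by
    intro i j
    apply Finset.sum_nonneg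
    intro r _
    apply mul_nonneg (hσ'_nonneg r)
    split_ifs <;> norm_num
  have hPref_le_one : ∀ i j : Fin M, Pref M σ' i j ≤ 1 := by
    intro i j
    rw [← hσ'_sum]
    apply Finset.sum_le_sum
    intro r _
    have : σ' r * (if r i < r j then (1:ℝ) else 0) ≤ σ' r * 1 := by
      apply mul_le_mul_of_nonneg_left _ (hσ'_nonneg r)
      split_ifs <;> norm_num
    simpa using this
  have hNe : ∀ i : Fin M, {x : ℝ | ∃ j, j ≠ i ∧ x = Pref M σ' i j}.Nonempty := by
    intro i
    obtain ⟨j, hj⟩ := Fintype.exists_ne_of_one_lt_card (by simp; omega) i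
    exact ⟨Pref M σ' i j, j, hj, rfl⟩
  have hBdd : ∀ i : Fin M, BddBelow {x : ℝ | ∃ j, j ≠ i ∧ x = Pref M σ' i j} := by
    intro i
    refine ⟨0, ?_⟩
    rintro x ⟨j, hj, rfl⟩
    exact hPref_nonneg i j
  have hmin_nonneg : ∀ i : Fin M, 0 ≤ minPref M σ' i := by
    intro i
    apply le_csInf (hNe i)
    rintro x ⟨j, hj, rfl⟩
    exact hPref_nonneg i j
  have hmin_le_one : minPref M σ' k ≤ 1 := by
    obtain ⟨j, hj⟩ := Fintype.exists_ne_of_one_lt_card (by simp; omega) k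
    exact le_trans (csInf_le (hBdd k) ⟨j, hj, rfl⟩) (hPref_le_one k j)
  -- minPref σ' j ≥ w j for j ≠ k
  have hts : ∀ j : Fin M, j ≠ k → ∀ i : Fin M, i ≠ j → w j ≤ Pref M σ' j i := by
    intro j hjk i hij
    have key : ∀ r : Equiv.Perm (Fin M),
        (if (r j : ℕ) = 0 then w j * σg j r else 0)
          ≤ σ' r * (if r j < r i then (1:ℝ) else 0) := by
      intro r
      by_cases h0 : (r j : ℕ) = 0
      · rw [if_pos h0]
        have hlt : r j < r i := by
          have hne : r i ≠ r j := fun h => hij (r.injective h)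
          have : (r j : ℕ) < (r i : ℕ) := by
            rcases Nat.eq_zero_or_pos (r i : ℕ) with h | h
            · exact absurd (Fin.ext (h.trans h0.symm) : r i = r j) hne
            · omega
          exact this
        rw [if_pos hlt, mul_one]
        rw [hσ' r]
        have h1 : w j * σg j r ≤ ∑ l ∈ Finset.univ.erase k, w l * σg l r := by
          apply Finset.single_le_sum (f := fun l => w l * σg l r)
          · intro l _
            exact mul_nonneg (hw_nonneg l) ((hσg l).1 r)
          · exact Finset.mem_erase.2 ⟨hjk, Finset.mem_univ j⟩
        have h2 : 0 ≤ w k * τ r := mul_nonneg (hw_nonneg k) (hτ.1 r)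
        linarith
      · rw [if_neg h0]
        apply mul_nonneg (hσ'_nonneg r)
        split_ifs <;> norm_num
    have hsum : ∑ r : Equiv.Perm (Fin M), (if (r j : ℕ) = 0 then w j * σg j r else 0)
        = w j := by
      have : ∑ r : Equiv.Perm (Fin M), (if (r j : ℕ) = 0 then w j * σg j r else 0)
          = w j * ∑ r : Equiv.Perm (Fin M), (if (r j : ℕ) = 0 then σg j r else 0) := by
        rw [Finset.mul_sum]
        apply Finset.sum_congr rfl
        intro r _
        split_ifs <;> simp
      rw [this]
      have h1 : ∑ r : Equiv.Perm (Fin M), (if (r j : ℕ) = 0 then σg j r else 0)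
          = ∑ r : Equiv.Perm (Fin M), σg j r := by
        apply Finset.sum_congr rfl
        intro r _
        split_ifs with h
        · rfl
        · by_contra hc
          exact h (hsupp j r fun h' => hc h'.symm)
      rw [h1, (hσg j).2, mul_one]
    calc w j = ∑ r : Equiv.Perm (Fin M), (if (r j : ℕ) = 0 then w j * σg j r else 0) :=
          hsum.symm
      _ ≤ Pref M σ' j i := Finset.sum_le_sum fun r _ => key r
  have hmin_ge : ∀ j : Fin M, j ≠ k → w j ≤ minPref M σ' j := by
    intro j hjk
    apply le_csInf (hNe j)
    rintro x ⟨i, hi, rfl⟩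
    exact hts j hjk i hi
  -- denominator bound
  have hD : minPref M σ' k + (1 - w k) ≤ ∑ j, minPref M σ' j := by
    have h1 : ∑ j, minPref M σ' j
        = (∑ j ∈ Finset.univ.erase k, minPref M σ' j) + minPref M σ' k :=
      (Finset.sum_erase_add _ _ (Finset.mem_univ k)).symm
    have h2 : ∑ j ∈ Finset.univ.erase k, w j = 1 - w k := by
      have := Finset.sum_erase_add Finset.univ w (Finset.mem_univ k)
      rw [hw_sum] at this
      linarith
    have h3 : ∑ j ∈ Finset.univ.erase k, w j ≤ ∑ j ∈ Finset.univ.erase k, minPref M σ' j :=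
      Finset.sum_le_sum fun j hj => hmin_ge j (Finset.mem_erase.1 hj).1
    linarith
  have hD_nonneg : 0 ≤ ∑ j, minPref M σ' j :=
    Finset.sum_nonneg fun j _ => hmin_nonneg j
  have hwk1 : w k ≤ 1 := by
    have h2 : ∑ j ∈ Finset.univ.erase k, w j = 1 - w k := by
      have := Finset.sum_erase_add Finset.univ w (Finset.mem_univ k)
      rw [hw_sum] at this
      linarith
    have : 0 ≤ ∑ j ∈ Finset.univ.erase k, w j :=
      Finset.sum_nonneg fun j _ => hw_nonneg j
    linarith
  rw [PhiStar]
  rcases eq_or_lt_of_le hD_nonneg with hD0 | hD0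
  · rw [← hD0, div_zero]
    have := hw_nonneg k
    linarith
  · rw [div_le_div_iff₀ hD0 (by norm_num : (0:ℝ) < 2)]
    have h1 : 0 ≤ (1 - w k) * (1 + w k - minPref M σ' k) := by
      apply mul_nonneg <;> linarith [hmin_nonneg k, hmin_le_one, hw_nonneg k]
    nlinarith [hw_nonneg k, hmin_nonneg k, hmin_le_one]
end
end

section
/- Let M = 2 and let Φ be any function from profiles over the two alternatives to probability distributions on {y_1, y_2} that is Condorcet consistent: whenever P^σ(y_i ≻ y_j) > 1/2 for i ≠ j, Φ(σ)(y_i) = 1. Then there exists a profile σ with w^σ_2 > 0 and Φ(σ)(y_2) = 0; hence no Condorcet-consistent rule can satisfy α-PPA with any positive α, i.e., Condorcet consistency and population-proportional alignment are incompatible. -/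
open Finset

noncomputable section

lemma perm2_sum (f : Equiv.Perm (Fin 2) → ℝ) :
    ∑ r : Equiv.Perm (Fin 2), f r = f 1 + f (Equiv.swap 0 1) := by
  have h : (Finset.univ : Finset (Equiv.Perm (Fin 2))) = {1, Equiv.swap 0 1} := by decide
  have hne : (1 : Equiv.Perm (Fin 2)) ≠ Equiv.swap 0 1 := by decide
  rw [h, Finset.sum_insert (by simpa using hne), Finset.sum_singleton]

def mySigma : Equiv.Perm (Fin 2) → ℝ := fun r => if r 0 = 0 then 3/4 else 1/4

lemma mySigma_profile : IsProfile 2 mySigma := by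
  constructor
  · intro r; unfold mySigma; split <;> norm_num
  · rw [perm2_sum]; simp [mySigma]; norm_num

lemma mySigma_pref : Pref 2 mySigma 0 1 = 3/4 := by
  rw [Pref, perm2_sum]; simp [mySigma]

lemma mySigma_top : topShare 2 mySigma 1 = 1/4 := by
  rw [topShare, perm2_sum]; simp [mySigma]

/-- for `M = 2`, any Condorcet-consistent rule `Φ` (mapping
profiles to probability distributions) assigns probability `0` to `y_2` on
some profile with `w^σ_2 > 0`; hence it violates `α`-PPA for every `α > 0`:
Condorcet consistency and population-proportional alignment are incompatible. -/
theorem condorcet_incompatible_with_PPA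
    (Φ : (Equiv.Perm (Fin 2) → ℝ) → Fin 2 → ℝ)
    (hdist : ∀ σ, IsProfile 2 σ → (∀ i, 0 ≤ Φ σ i) ∧ ∑ i, Φ σ i = 1)
    (hcc : ∀ σ, IsProfile 2 σ → ∀ i j : Fin 2, i ≠ j →
      1 / 2 < Pref 2 σ i j → Φ σ i = 1) :
    (∃ σ, IsProfile 2 σ ∧ 0 < topShare 2 σ 1 ∧ Φ σ 1 = 0) ∧
    ∀ α : ℝ, 0 < α →
      ¬ ∀ σ, IsProfile 2 σ → ∀ i, α * topShare 2 σ i ≤ Φ σ i := by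
  have hprof := mySigma_profile
  have h0 : Φ mySigma 0 = 1 := by
    apply hcc mySigma hprof 0 1 (by decide)
    rw [mySigma_pref]; norm_num
  have hd := hdist mySigma hprof
  have hsum : Φ mySigma 0 + Φ mySigma 1 = 1 := by
    have := hd.2; rwa [Fin.sum_univ_two] at this
  have h1 : Φ mySigma 1 = 0 := by linarith
  have htop : (0:ℝ) < topShare 2 mySigma 1 := by rw [mySigma_top]; norm_num
  refine ⟨⟨mySigma, hprof, htop, h1⟩, ?_⟩
  intro α hα hppa
  have := hppa mySigma hprof 1
  rw [h1, mySigma_top] at this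
  nlinarith
end
end

section
/- Let σ be a profile over rankings of M alternatives and suppose y_{i*} is a Condorcet winner, i.e., P^σ(y_{i*} ≻ y_j) > 1/2 for all j ≠ i*. Then u_{i*} > 1/2 and u_j < 1/2 for every j ≠ i*; in particular, i* is the unique maximizer of u over {1, …, M}, so the limiting policy Φ^∞, which places probability 1 on the alternative maximizing u, selects the Condorcet winner (Condorcet consistency of Φ^∞). -/
open Finset

noncomputable section

lemma pref_symm (M : ℕ) (σ : Equiv.Perm (Fin M) → ℝ) (hσ : IsProfile M σ)
    {i j : Fin M} (h : i ≠ j) : Pref M σ j i = 1 - Pref M σ i j := by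
  have key : Pref M σ i j + Pref M σ j i = 1 := by
    have hterm : ∀ r : Equiv.Perm (Fin M),
        σ r * (if r i < r j then (1:ℝ) else 0) + σ r * (if r j < r i then (1:ℝ) else 0) = σ r := by
      intro r
      have hne : r i ≠ r j := fun h' => h (r.injective h')
      rcases lt_or_gt_of_ne hne with h1 | h1
      · simp [h1, not_lt.mpr h1.le]
      · simp [h1, not_lt.mpr h1.le]
    rw [Pref, Pref, ← Finset.sum_add_distrib,
      Finset.sum_congr rfl (fun r _ => hterm r), hσ.2]
  linarith

lemma minPref_finite (M : ℕ) (σ : Equiv.Perm (Fin M) → ℝ) (i : Fin M) :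
    ({x : ℝ | ∃ j, j ≠ i ∧ x = Pref M σ i j}).Finite :=
  (Set.finite_range (Pref M σ i)).subset (fun _x ⟨j, _, hx⟩ => ⟨j, hx.symm⟩)

/-- if `y_{i*}` is a Condorcet winner of `σ`, then
`u_{i*} > 1/2` and `u_j < 1/2` for `j ≠ i*`; in particular `i*` is the unique
maximizer of `u`, so the limiting policy `Φ^∞` selects the Condorcet winner. -/
theorem condorcet_winner_unique_u_maximizer
    (M : ℕ) (hM : 2 ≤ M) (σ : Equiv.Perm (Fin M) → ℝ) (hσ : IsProfile M σ)
    (istar : Fin M) (hcw : ∀ j, j ≠ istar → 1 / 2 < Pref M σ istar j) :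
    1 / 2 < minPref M σ istar ∧
    (∀ j, j ≠ istar → minPref M σ j < 1 / 2) ∧
    ∀ j, j ≠ istar → minPref M σ j < minPref M σ istar := by
  haveI : Nontrivial (Fin M) := Fin.nontrivial_iff_two_le.mpr hM
  have hne : ∀ i : Fin M, ({x : ℝ | ∃ j, j ≠ i ∧ x = Pref M σ i j}).Nonempty := by
    intro i
    obtain ⟨j, hj⟩ := exists_ne i
    exact ⟨Pref M σ i j, j, hj, rfl⟩
  have h1 : 1 / 2 < minPref M σ istar := by
    obtain ⟨j, hj, hx⟩ := (hne istar).csInf_mem (minPref_finite M σ istar)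
    rw [minPref, hx]
    exact hcw j hj
  have h2 : ∀ j, j ≠ istar → minPref M σ j < 1 / 2 := by
    intro j hj
    have hle : minPref M σ j ≤ Pref M σ j istar :=
      csInf_le (minPref_finite M σ j).bddBelow ⟨istar, hj.symm, rfl⟩
    have hgt := hcw j hj
    rw [pref_symm M σ hσ (Ne.symm hj)] at hle
    linarith
  exact ⟨h1, h2, fun j hj => lt_trans (h2 j hj) h1⟩
end
end

section
/- Let σ be a profile over rankings of M alternatives with a Condorcet winner y_i, so that u_i > 1/2 and u_j < 1/2 for all j ≠ i, let α_c ∈ (0, 1), and let β ≥ 0 satisfy β·(u_i − 1/2) ≥ log((M − 1)·α_c/(1 − α_c)). Then the softmax policy π^β, defined by π^β(y_j) := u_j·exp(β·u_j) / Σ_{m=1}^M u_m·exp(β·u_m), satisfies π^β(y_i) ≥ α_c. -/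
open Finset

noncomputable section

lemma erase_nonempty' (M : ℕ) (hM : 2 ≤ M) (j : Fin M) :
    (Finset.univ.erase j).Nonempty := by
  rw [← Finset.card_pos, Finset.card_erase_of_mem (Finset.mem_univ _),
    Finset.card_univ, Fintype.card_fin]
  omega

lemma minPref_eq_inf' (M : ℕ) (hM : 2 ≤ M) (σ : Equiv.Perm (Fin M) → ℝ) (j : Fin M) :
    minPref M σ j = (Finset.univ.erase j).inf' (erase_nonempty' M hM j) (Pref M σ j) := by
  rw [Finset.inf'_eq_csInf_image, minPref]
  congr 1
  ext x
  simp [eq_comm]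

lemma Pref_nonneg (M : ℕ) (σ : Equiv.Perm (Fin M) → ℝ) (hσ : IsProfile M σ)
    (a b : Fin M) : 0 ≤ Pref M σ a b := by
  apply Finset.sum_nonneg
  intro r _
  have := hσ.1 r
  positivity

lemma Pref_add_Pref (M : ℕ) (σ : Equiv.Perm (Fin M) → ℝ) (hσ : IsProfile M σ)
    (a b : Fin M) (hab : a ≠ b) : Pref M σ a b + Pref M σ b a = 1 := by
  rw [Pref, Pref, ← Finset.sum_add_distrib]
  have h : ∀ r ∈ (Finset.univ : Finset (Equiv.Perm (Fin M))),
      σ r * (if r a < r b then (1 : ℝ) else 0) + σ r * (if r b < r a then (1 : ℝ) else 0)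
      = σ r := by
    intro r _
    have hr : r a ≠ r b := fun h => hab (r.injective h)
    rcases lt_or_gt_of_ne hr with h | h
    · rw [if_pos h, if_neg (not_lt.2 h.le)]; ring
    · rw [if_neg (not_lt.2 h.le), if_pos h]; ring
  rw [Finset.sum_congr rfl h, hσ.2]

/-- Condorcet consistency at finite `β`: for a Condorcet winner
`y_i` and `β ≥ 0` with `β (u_i − 1/2) ≥ log((M−1) α_c / (1 − α_c))`, the
softmax policy puts mass at least `α_c` on `y_i`. -/
theorem softmax_condorcet_at_finite_beta
    (M : ℕ) (hM : 2 ≤ M) (σ : Equiv.Perm (Fin M) → ℝ) (hσ : IsProfile M σ)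
    (i : Fin M) (hcw : ∀ j, j ≠ i → 1 / 2 < Pref M σ i j)
    (αc : ℝ) (hαc : αc ∈ Set.Ioo (0 : ℝ) 1)
    (β : ℝ) (hβ0 : 0 ≤ β)
    (hβ : Real.log (((M : ℝ) - 1) * αc / (1 - αc)) ≤ β * (minPref M σ i - 1 / 2)) :
    αc ≤ minPref M σ i * Real.exp (β * minPref M σ i)
        / ∑ m, minPref M σ m * Real.exp (β * minPref M σ m) := by
  obtain ⟨hα0, hα1⟩ := hαc
  set u : Fin M → ℝ := minPref M σ with hu
  -- basic bounds on u
  have hui : 1 / 2 < u i := by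
    rw [hu, minPref_eq_inf' M hM]
    rw [Finset.lt_inf'_iff]
    intro j hj
    exact hcw j (Finset.ne_of_mem_erase hj)
  have hunn : ∀ j, 0 ≤ u j := by
    intro j
    rw [hu, minPref_eq_inf' M hM]
    apply Finset.le_inf'
    intro b _
    exact Pref_nonneg M σ hσ j b
  have huj : ∀ j, j ≠ i → u j ≤ 1 / 2 := by
    intro j hj
    have h1 : u j ≤ Pref M σ j i := by
      rw [hu, minPref_eq_inf' M hM]
      exact Finset.inf'_le (Pref M σ j) (Finset.mem_erase.2 ⟨Ne.symm hj, Finset.mem_univ _⟩)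
    have h2 := Pref_add_Pref M σ hσ i j (fun h => hj h.symm)
    have h3 := hcw j hj
    linarith
  -- per-term bound for j ≠ i
  have hterm : ∀ j, j ≠ i →
      u j * Real.exp (β * u j) ≤ (1 / 2) * Real.exp (β / 2) := by
    intro j hj
    have h1 := huj j hj
    have h2 : Real.exp (β * u j) ≤ Real.exp (β / 2) := by
      apply Real.exp_le_exp.2
      nlinarith
    have := Real.exp_pos (β * u j)
    nlinarith [hunn j]
  -- sum over j ≠ i
  have hsum : ∑ j ∈ Finset.univ.erase i, u j * Real.exp (β * u j)
      ≤ ((M : ℝ) - 1) * ((1 / 2) * Real.exp (β / 2)) := by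
    have h1 : ∑ j ∈ Finset.univ.erase i, u j * Real.exp (β * u j)
        ≤ ∑ _j ∈ Finset.univ.erase i, (1 / 2) * Real.exp (β / 2) :=
      Finset.sum_le_sum (fun j hj => hterm j (Finset.ne_of_mem_erase hj))
    rw [Finset.sum_const, Finset.card_erase_of_mem (Finset.mem_univ _), Finset.card_univ,
      Fintype.card_fin, nsmul_eq_mul] at h1
    have hMc : ((M - 1 : ℕ) : ℝ) = (M : ℝ) - 1 := by
      rw [Nat.cast_sub (by omega)]; simp
    rw [hMc] at h1
    exact h1
  -- exponential inequality from hβ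
  have hx : (0 : ℝ) < ((M : ℝ) - 1) * αc / (1 - αc) := by
    have : (1 : ℝ) ≤ (M : ℝ) - 1 := by
      have : (2 : ℝ) ≤ (M : ℝ) := by exact_mod_cast hM
      linarith
    have h1 : 0 < 1 - αc := by linarith
    positivity
  have hexp : ((M : ℝ) - 1) * αc / (1 - αc) ≤ Real.exp (β * (u i - 1 / 2)) := by
    calc ((M : ℝ) - 1) * αc / (1 - αc)
        = Real.exp (Real.log (((M : ℝ) - 1) * αc / (1 - αc))) := (Real.exp_log hx).symm
      _ ≤ Real.exp (β * (u i - 1 / 2)) := Real.exp_le_exp.2 hβ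
  have hsplit : β * u i = β * (u i - 1 / 2) + β / 2 := by ring
  have hkey : αc * (((M : ℝ) - 1) * ((1 / 2) * Real.exp (β / 2)))
      ≤ (1 - αc) * (u i * Real.exp (β * u i)) := by
    have h1 : 0 < 1 - αc := by linarith
    have h2 : ((M : ℝ) - 1) * αc ≤ (1 - αc) * Real.exp (β * (u i - 1 / 2)) := by
      rw [div_le_iff₀ h1] at hexp
      linarith [hexp]
    have h3 : Real.exp (β * u i) = Real.exp (β * (u i - 1 / 2)) * Real.exp (β / 2) := by
      rw [← Real.exp_add, ← hsplit]
    rw [h3]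
    have hep := (Real.exp_pos (β / 2)).le
    have h4 := mul_le_mul_of_nonneg_right h2 hep
    have hFE : 0 ≤ (1 - αc) * Real.exp (β * (u i - 1 / 2)) * Real.exp (β / 2) := by
      positivity
    have h5 := mul_le_mul_of_nonneg_left hui.le hFE
    nlinarith [h4, h5]
  -- denominator
  have hDsplit : ∑ m, u m * Real.exp (β * u m)
      = u i * Real.exp (β * u i) + ∑ j ∈ Finset.univ.erase i, u j * Real.exp (β * u j) :=
    (Finset.add_sum_erase _ _ (Finset.mem_univ i)).symm
  have hrestnn : 0 ≤ ∑ j ∈ Finset.univ.erase i, u j * Real.exp (β * u j) := by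
    apply Finset.sum_nonneg
    intro j _
    exact mul_nonneg (hunn j) (Real.exp_pos _).le
  have hD : 0 < ∑ m, u m * Real.exp (β * u m) := by
    rw [hDsplit]
    have : 0 < u i * Real.exp (β * u i) :=
      mul_pos (by linarith) (Real.exp_pos _)
    linarith
  rw [le_div_iff₀ hD, hDsplit]
  have hchain : αc * ∑ j ∈ Finset.univ.erase i, u j * Real.exp (β * u j)
      ≤ (1 - αc) * (u i * Real.exp (β * u i)) :=
    le_trans (by nlinarith [hsum]) hkey
  nlinarith [hchain]
end
end
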